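/- Let (β,γ) be antiferromagnetic and let I be a closed bounded interval of positive reals. Let R₁,…,R_k and Q₀ be twice continuously differentiable functions from I into the open interval (γ, 1/β) (where 1/β is interpreted as +∞ if β = 0). For each m ≥ 0 and each sequence a₀,…,a_{m−1} ∈ {1,…,k}, define functions Q₁,…,Q_m on I by Q_{i+1}(λ) = (1 + γλ·R_{a_i}(λ)·Q_i(λ))/(β + λ·R_{a_i}(λ)·Q_i(λ)). Then there exist bounded intervals I₁ and I₂, depending only on β, γ, I, R₁,…,R_k and Q₀ (but not on m or on the sequence a), such that each Q_m is twice continuously differentiable and for every λ ∈ I one has Q_m'(λ) ∈ I₁ and Q_m''(λ) ∈ I₂. -/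

import Mathlib

/-- `(β, γ)` is antiferromagnetic: both are nonnegative, `βγ < 1`, and not both are zero. -/
def Antiferro (β γ : ℝ) : Prop :=
  0 ≤ β ∧ 0 ≤ γ ∧ β * γ < 1 ∧ (β ≠ 0 ∨ γ ≠ 0)

/-- The sequence of functions `Q₀, Q₁, Q₂, …` determined by a sequence `a` of indices via
`Q_{i+1}(λ) = (1 + γλ·R_{a_i}(λ)·Q_i(λ))/(β + λ·R_{a_i}(λ)·Q_i(λ))`. -/
noncomputable def Qseq (β γ : ℝ) {k : ℕ} (R : Fin k → ℝ → ℝ) (Q₀ : ℝ → ℝ)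
    (a : ℕ → Fin k) : ℕ → ℝ → ℝ
  | 0 => Q₀
  | (m + 1) => fun lam =>
      (1 + γ * lam * R (a m) lam * Qseq β γ R Q₀ a m lam) /
        (β + lam * R (a m) lam * Qseq β γ R Q₀ a m lam)


open Set

lemma arith1 (c κ M₁ W1 A B q s N D δ u : ℝ)
    (hc : 0 < c) (hκ0 : 0 ≤ κ) (hM₁0 : 0 ≤ M₁) (hW1 : 0 ≤ W1) (hA : 0 < A)
    (hδ : 0 < δ) (hδD : δ ≤ D)
    (hqB : q ≤ B) (hq0 : 0 ≤ q) (hs0 : 0 ≤ s)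
    (hu : u ≤ W1*q + M₁*s)
    (hκx : c*s ≤ κ*(N*D))
    (hADN : A*D ≤ N)
    (hM₁ : c*(W1*B) ≤ (1-κ)*M₁*A*δ^2) (hκ1 : κ < 1) :
    c*u ≤ M₁*(N*D) := by
  have hD : 0 < D := lt_of_lt_of_le hδ hδD
  have hN : 0 < N := lt_of_lt_of_le (by positivity) hADN
  have e1 : c*u ≤ c*(W1*q) + c*(M₁*s) :=
    (mul_le_mul_of_nonneg_left hu hc.le).trans_eq (by ring)
  have e2 : c*(M₁*s) ≤ κ*(M₁*(N*D)) := by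
    have h := mul_le_mul_of_nonneg_left hκx hM₁0
    linarith [h]
  have e3 : c*(W1*q) ≤ c*(W1*B) := by
    have h := mul_le_mul_of_nonneg_left hqB (mul_nonneg hc.le hW1)
    linarith [h]
  have e5 : A*δ^2 ≤ N*D := by
    have h1 := mul_le_mul_of_nonneg_right hADN hD.le
    have h2 := mul_le_mul_of_nonneg_left hδD (mul_nonneg hA.le hδ.le)
    have h3 := mul_le_mul_of_nonneg_left hδD (mul_nonneg hA.le hD.le)
    nlinarith [h1, h2, h3]
  have e4 : (1-κ)*M₁*A*δ^2 ≤ (1-κ)*(M₁*(N*D)) := by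
    have h := mul_le_mul_of_nonneg_left e5 (mul_nonneg (by linarith : (0:ℝ) ≤ 1-κ) hM₁0)
    linarith [h]
  linarith [e1, e2, e3, e4, hM₁]

lemma arith2 (c κ M₂ CE SD A δ N D s w u v : ℝ)
    (hc : 0 < c) (hκ0 : 0 ≤ κ) (hM₂0 : 0 ≤ M₂) (hCE : 0 ≤ CE) (hA : 0 < A)
    (hδ : 0 < δ) (hδD : δ ≤ D) (hs0 : 0 ≤ s)
    (hv : v ≤ CE + M₂*s) (hv0 : 0 ≤ v)
    (hu : u ≤ SD) (hu0 : 0 ≤ u)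
    (hw : w ≤ v*D + 2*u^2)
    (hκx : c*s ≤ κ*(N*D))
    (hADN : A*D ≤ N)
    (hM₂ : c*(CE*δ + 2*SD^2) ≤ (1-κ)*M₂*A*δ^3) (hκ1 : κ < 1) :
    c*w ≤ M₂*(N*(D^2)) := by
  have hD : 0 < D := lt_of_lt_of_le hδ hδD
  have hN : 0 < N := lt_of_lt_of_le (by positivity) hADN
  have hSD : 0 ≤ SD := le_trans hu0 hu
  have e1 : c*w ≤ c*(v*D) + c*(2*u^2) := by
    have h := mul_le_mul_of_nonneg_left hw hc.le
    linarith [h]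
  have e2 : c*(v*D) ≤ c*(CE*D) + M₂*D*(c*s) := by
    have h := mul_le_mul_of_nonneg_left (mul_le_mul_of_nonneg_right hv hD.le) hc.le
    linarith [h]
  have e3 : M₂*D*(c*s) ≤ κ*(M₂*(N*(D^2))) := by
    have h := mul_le_mul_of_nonneg_left hκx (mul_nonneg hM₂0 hD.le)
    linarith [h]
  have e4 : c*(2*u^2) ≤ c*(2*SD^2) := by
    have h1 : u^2 ≤ SD^2 := pow_le_pow_left₀ hu0 hu 2
    have h := mul_le_mul_of_nonneg_left h1 hc.le
    linarith [h]
  have e5 : δ*(c*(CE*D) + c*(2*SD^2)) ≤ D*(c*(CE*δ + 2*SD^2)) := by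
    have h := mul_le_mul_of_nonneg_left hδD (mul_nonneg hc.le (by positivity : (0:ℝ) ≤ 2*SD^2))
    linarith [h]
  have e6 : D*(c*(CE*δ + 2*SD^2)) ≤ D*((1-κ)*M₂*A*δ^3) :=
    mul_le_mul_of_nonneg_left hM₂ hD.le
  have e7 : c*(CE*D) + c*(2*SD^2) ≤ (1-κ)*M₂*A*(δ^2*D) := by
    have h1 := e5.trans e6
    have h2 : D*((1-κ)*M₂*A*δ^3) = δ*((1-κ)*M₂*A*(δ^2*D)) := by ring
    exact le_of_mul_le_mul_left (h1.trans_eq h2) hδ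
  have e8 : A*(δ^2*D) ≤ N*D^2 := by
    have hδ2 : δ^2 ≤ D^2 := pow_le_pow_left₀ hδ.le hδD 2
    have h4 := mul_le_mul_of_nonneg_right hδ2 (mul_nonneg hA.le hD.le)
    have h1 := mul_le_mul_of_nonneg_right hADN (sq_nonneg D)
    linarith [h4, h1]
  have e9 : (1-κ)*M₂*A*(δ^2*D) ≤ (1-κ)*(M₂*(N*(D^2))) := by
    have h := mul_le_mul_of_nonneg_left e8 (mul_nonneg (by linarith : (0:ℝ) ≤ 1-κ) hM₂0)
    linarith [h]
  linarith [e1, e2, e3, e4, e7, e9]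

set_option maxHeartbeats 1000000 in

lemma step_lemma (β γ lo hi A B ra rb r1 r2 κ M₁ M₂ : ℝ)
    (hβ : 0 ≤ β) (hγ : 0 ≤ γ) (hβγ : β * γ < 1)
    (hlo : 0 < lo) (hlohi : lo < hi)
    (hγA : γ < A) (hA : 0 < A) (hAB : A ≤ B)
    (hra : 0 < ra) (hrarb : ra ≤ rb) (hr1 : 0 ≤ r1) (hr2 : 0 ≤ r2)
    (hκ0 : 0 ≤ κ) (hκ1 : κ < 1)
    (hκprop : ∀ s ∈ Set.Icc (lo*ra*A) (hi*rb*B), (1-β*γ)*s ≤ κ * ((1+γ*s)*(β+s)))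
    (hδ : 0 < β + lo*ra*A)
    (hAinv : A ≤ γ + (1-β*γ)/(β + hi*rb*B))
    (hBinv : γ + (1-β*γ)/(β + lo*ra*A) ≤ B)
    (hM₁0 : 0 ≤ M₁)
    (hM₁ : (1-β*γ)*((rb + hi*r1)*B) ≤ (1-κ)*M₁*A*(β+lo*ra*A)^2)
    (hM₂0 : 0 ≤ M₂)
    (hM₂ : (1-β*γ)*(((2*r1 + hi*r2)*B + 2*(rb+hi*r1)*M₁*B)*(β+lo*ra*A)
        + 2*((rb+hi*r1)*B + M₁*(hi*rb*B))^2) ≤ (1-κ)*M₂*A*(β+lo*ra*A)^3)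
    (r Q : ℝ → ℝ)
    (hr : ContDiffOn ℝ 2 r (Set.Icc lo hi)) (hQ : ContDiffOn ℝ 2 Q (Set.Icc lo hi))
    (hrb : ∀ x ∈ Set.Icc lo hi, ra ≤ r x ∧ r x ≤ rb ∧
       |derivWithin r (Set.Icc lo hi) x| ≤ r1 ∧
       |derivWithin (derivWithin r (Set.Icc lo hi)) (Set.Icc lo hi) x| ≤ r2)
    (hQb : ∀ x ∈ Set.Icc lo hi, A ≤ Q x ∧ Q x ≤ B ∧
       |derivWithin Q (Set.Icc lo hi) x| ≤ M₁ * Q x ∧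
       |derivWithin (derivWithin Q (Set.Icc lo hi)) (Set.Icc lo hi) x| ≤ M₂ * Q x) :
    ContDiffOn ℝ 2 (fun y => (1 + γ*y*r y*Q y)/(β + y*r y*Q y)) (Set.Icc lo hi) ∧
    ∀ x ∈ Set.Icc lo hi,
      A ≤ (1 + γ*x*r x*Q x)/(β + x*r x*Q x) ∧ (1 + γ*x*r x*Q x)/(β + x*r x*Q x) ≤ B ∧
      |derivWithin (fun y => (1 + γ*y*r y*Q y)/(β + y*r y*Q y)) (Set.Icc lo hi) x|
        ≤ M₁ * ((1 + γ*x*r x*Q x)/(β + x*r x*Q x)) ∧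
      |derivWithin (derivWithin (fun y => (1 + γ*y*r y*Q y)/(β + y*r y*Q y)) (Set.Icc lo hi))
          (Set.Icc lo hi) x|
        ≤ M₂ * ((1 + γ*x*r x*Q x)/(β + x*r x*Q x)) := by
  have hS : UniqueDiffOn ℝ (Set.Icc lo hi) := uniqueDiffOn_Icc hlohi
  set S := Set.Icc lo hi with hSdef
  set r' := derivWithin r S with hr'def
  set Q' := derivWithin Q S with hQ'def
  set r'' := derivWithin r' S with hr''def
  set Q'' := derivWithin Q' S with hQ''def
  have hcr' : ContDiffOn ℝ 1 r' S := hr.derivWithin hS le_rfl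
  have hcQ' : ContDiffOn ℝ 1 Q' S := hQ.derivWithin hS le_rfl
  -- product bound
  have hsb : ∀ x ∈ S, lo*ra*A ≤ x*r x*Q x ∧ x*r x*Q x ≤ hi*rb*B := by
    intro x hx
    obtain ⟨hx1, hx2⟩ := hx
    obtain ⟨h1, h2, -, -⟩ := hrb x ⟨hx1, hx2⟩
    obtain ⟨h3, h4, -, -⟩ := hQb x ⟨hx1, hx2⟩
    have hx0 : 0 < x := lt_of_lt_of_le hlo hx1
    have hr0 : 0 < r x := lt_of_lt_of_le hra h1
    have hQ0 : 0 < Q x := lt_of_lt_of_le hA h3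
    have hxr : 0 ≤ x * r x := by positivity
    constructor
    · have := mul_le_mul (mul_le_mul hx1 h1 hra.le hx0.le) h3 hA.le hxr
      linarith
    · have := mul_le_mul (mul_le_mul hx2 h2 hr0.le (by linarith)) h4 hQ0.le
        (by nlinarith)
      linarith
  have hDpos : ∀ x ∈ S, 0 < β + x*r x*Q x := fun x hx =>
    lt_of_lt_of_le hδ (by linarith [(hsb x hx).1])
  have hne : ∀ x ∈ S, β + x*r x*Q x ≠ 0 := fun x hx => (hDpos x hx).ne'
  have h1βγ : (0:ℝ) < 1 - β*γ := by linarith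
  have hrdiff : ∀ x ∈ S, HasDerivWithinAt r (r' x) S x := fun x hx =>
    ((hr.differentiableOn (by norm_num)) x hx).hasDerivWithinAt
  have hQdiff : ∀ x ∈ S, HasDerivWithinAt Q (Q' x) S x := fun x hx =>
    ((hQ.differentiableOn (by norm_num)) x hx).hasDerivWithinAt
  have hr'diff : ∀ x ∈ S, HasDerivWithinAt r' (r'' x) S x := fun x hx =>
    ((hcr'.differentiableOn one_ne_zero) x hx).hasDerivWithinAt
  have hQ'diff : ∀ x ∈ S, HasDerivWithinAt Q' (Q'' x) S x := fun x hx =>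
    ((hcQ'.differentiableOn one_ne_zero) x hx).hasDerivWithinAt
  set sd : ℝ → ℝ := fun y => (1*r y + y*r' y) * Q y + (y*r y) * Q' y with hsddef
  have hsdHas : ∀ x ∈ S, HasDerivWithinAt (fun y => y*r y*Q y) (sd x) S x := fun x hx =>
    (((hasDerivWithinAt_id x S).mul (hrdiff x hx)).mul (hQdiff x hx))
  -- first derivative of f
  have hFHas : ∀ x ∈ S, HasDerivWithinAt (fun y => (1 + γ*y*r y*Q y)/(β + y*r y*Q y))
      (-(1-β*γ)*sd x/(β+x*r x*Q x)^2) S x := by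
    intro x hx
    have hnum : HasDerivWithinAt (fun y => 1 + γ*y*r y*Q y) (γ * sd x) S x := by
      have h1 : (fun y : ℝ => 1 + γ*y*r y*Q y) = (fun y => 1 + γ*(y*r y*Q y)) := by
        funext y; ring
      rw [h1]
      exact ((hsdHas x hx).const_mul γ).const_add 1
    have hden : HasDerivWithinAt (fun y => β + y*r y*Q y) (sd x) S x :=
      (hsdHas x hx).const_add β
    have h := hnum.div hden (hne x hx)
    refine h.congr_deriv ?_
    have hDne := hne x hx
    field_simp
    ring
  have hf'eq : ∀ x ∈ S, derivWithin (fun y => (1 + γ*y*r y*Q y)/(β + y*r y*Q y)) S x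
      = -(1-β*γ)*sd x/(β+x*r x*Q x)^2 := fun x hx => (hFHas x hx).derivWithin (hS x hx)
  -- smoothness
  have hcs : ContDiffOn ℝ 2 (fun y : ℝ => y*r y*Q y) S := (contDiffOn_id.mul hr).mul hQ
  have hcf : ContDiffOn ℝ 2 (fun y => (1 + γ*y*r y*Q y)/(β + y*r y*Q y)) S := by
    have hcnum : ContDiffOn ℝ 2 (fun y : ℝ => 1 + γ*y*r y*Q y) S := by
      have h1 : (fun y : ℝ => 1 + γ*y*r y*Q y) = (fun y => 1 + γ*(y*r y*Q y)) := by
        funext y; ring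
      rw [h1]
      exact contDiffOn_const.add (contDiffOn_const.mul hcs)
    have hcden : ContDiffOn ℝ 2 (fun y : ℝ => β + y*r y*Q y) S :=
      contDiffOn_const.add hcs
    exact hcnum.div hcden hne
  -- second derivative
  set E : ℝ → ℝ := fun x => ((1*r' x + (1*r' x + x*r'' x)) * Q x + (1*r x + x*r' x) * Q' x)
      + ((1*r x + x*r' x) * Q' x + (x*r x) * Q'' x) with hEdef
  have hsdDiffHas : ∀ x ∈ S, HasDerivWithinAt sd (E x) S x := by
    intro x hx
    have h1 : HasDerivWithinAt (fun y => 1*r y + y*r' y)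
        (1*r' x + (1*r' x + x*r'' x)) S x :=
      ((hrdiff x hx).const_mul 1).add ((hasDerivWithinAt_id x S).mul (hr'diff x hx))
    exact (h1.mul (hQdiff x hx)).add
      (((hasDerivWithinAt_id x S).mul (hrdiff x hx)).mul (hQ'diff x hx))
  have hG1Has : ∀ x ∈ S, HasDerivWithinAt (fun y => -(1-β*γ)*sd y/(β+y*r y*Q y)^2)
      (-(1-β*γ)*(E x*(β+x*r x*Q x) - 2*sd x^2)/(β+x*r x*Q x)^3) S x := by
    intro x hx
    have hnum : HasDerivWithinAt (fun y => -(1-β*γ)*sd y) (-(1-β*γ)*E x) S x :=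
      (hsdDiffHas x hx).const_mul _
    have hden : HasDerivWithinAt (fun y => (β+y*r y*Q y)^2)
        (((2:ℕ):ℝ)*(β+x*r x*Q x)^(2-1)*sd x) S x := ((hsdHas x hx).const_add β).pow 2
    have hd2ne : (β+x*r x*Q x)^2 ≠ 0 := pow_ne_zero 2 (hne x hx)
    have h := hnum.div hden hd2ne
    refine h.congr_deriv ?_
    have hDne := hne x hx
    field_simp
    ring
  have hf''eq : ∀ x ∈ S, derivWithin
      (derivWithin (fun y => (1 + γ*y*r y*Q y)/(β + y*r y*Q y)) S) S x
      = -(1-β*γ)*(E x*(β+x*r x*Q x) - 2*sd x^2)/(β+x*r x*Q x)^3 := by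
    intro x hx
    rw [derivWithin_congr (fun y hy => hf'eq y hy) (hf'eq x hx)]
    exact (hG1Has x hx).derivWithin (hS x hx)
  refine ⟨hcf, ?_⟩
  intro x hx
  obtain ⟨hraR, hRrb, hr1b, hr2b⟩ := hrb x hx
  obtain ⟨hAQ, hQB, hQ1b, hQ2b⟩ := hQb x hx
  obtain ⟨hxlo, hxhi⟩ := hx
  have hx0 : 0 < x := lt_of_lt_of_le hlo hxlo
  have hr0 : 0 < r x := lt_of_lt_of_le hra hraR
  have hQ0 : 0 < Q x := lt_of_lt_of_le hA hAQ
  have hhi : 0 < hi := hlo.trans hlohi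
  have hrb0 : 0 < rb := lt_of_lt_of_le hra hrarb
  have hBpos : 0 < B := lt_of_lt_of_le hA hAB
  have hW1nn : (0:ℝ) ≤ rb + hi*r1 := add_nonneg hrb0.le (mul_nonneg hhi.le hr1)
  have hCEnn : (0:ℝ) ≤ 2*r1 + hi*r2 := add_nonneg (by linarith) (mul_nonneg hhi.le hr2)
  have hsnn : (0:ℝ) ≤ x*r x*Q x := by positivity
  have hCE2nn : (0:ℝ) ≤ (2*r1+hi*r2)*B + 2*(rb+hi*r1)*M₁*B := by
    have h1 : (0:ℝ) ≤ (2*r1+hi*r2)*B := mul_nonneg hCEnn hBpos.le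
    have h2 : (0:ℝ) ≤ (rb+hi*r1)*M₁ := mul_nonneg hW1nn hM₁0
    nlinarith [mul_nonneg h2 hBpos.le]
  obtain ⟨hs1, hs2⟩ := hsb x ⟨hxlo, hxhi⟩
  have hD : 0 < β + x*r x*Q x := hDpos x ⟨hxlo, hxhi⟩
  have hDδ : β + lo*ra*A ≤ β + x*r x*Q x := by linarith
  have hDmax : β + x*r x*Q x ≤ β + hi*rb*B := by linarith
  have hDmaxpos : (0:ℝ) < β + hi*rb*B := lt_of_lt_of_le hD hDmax
  have hfform : (1 + γ*x*r x*Q x)/(β + x*r x*Q x)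
      = γ + (1-β*γ)/(β+x*r x*Q x) := by
    field_simp
    ring
  -- range bounds
  have hfA : A ≤ (1 + γ*x*r x*Q x)/(β + x*r x*Q x) := by
    rw [hfform]
    have : (1-β*γ)/(β + hi*rb*B) ≤ (1-β*γ)/(β+x*r x*Q x) :=
      div_le_div_of_nonneg_left h1βγ.le hD hDmax
    linarith
  have hfB : (1 + γ*x*r x*Q x)/(β + x*r x*Q x) ≤ B := by
    rw [hfform]
    have : (1-β*γ)/(β+x*r x*Q x) ≤ (1-β*γ)/(β + lo*ra*A) :=
      div_le_div_of_nonneg_left h1βγ.le hδ hDδ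
    linarith
  have hADN : A*(β + x*r x*Q x) ≤ 1 + γ*x*r x*Q x := by
    have := (le_div_iff₀ hD).mp hfA
    linarith
  have hκx := hκprop (x*r x*Q x) ⟨hs1, hs2⟩
  have hNγs : 1 + γ*(x*r x*Q x) = 1 + γ*x*r x*Q x := by ring
  rw [hNγs] at hκx
  -- bound on |sd x|
  have hsdb : |sd x| ≤ (rb+hi*r1)*Q x + M₁*(x*r x*Q x) := by
    have h1 : |(1*r x + x*r' x) * Q x| ≤ (rb+hi*r1)*Q x := by
      rw [abs_mul, abs_of_pos hQ0]
      have : |1*r x + x*r' x| ≤ rb + hi*r1 := by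
        have hxr' : |x*r' x| ≤ hi*r1 := by
          rw [abs_mul, abs_of_pos hx0]
          exact mul_le_mul hxhi hr1b (abs_nonneg _) (by linarith)
        calc |1*r x + x*r' x| ≤ |1*r x| + |x*r' x| := abs_add_le _ _
          _ ≤ rb + hi*r1 := by
              rw [one_mul, abs_of_pos hr0]; linarith
      exact mul_le_mul_of_nonneg_right this hQ0.le
    have h2 : |(x*r x) * Q' x| ≤ M₁*(x*r x*Q x) := by
      rw [abs_mul, abs_of_pos (by positivity : (0:ℝ) < x*r x)]
      calc (x*r x)*|Q' x| ≤ (x*r x)*(M₁*Q x) :=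
            mul_le_mul_of_nonneg_left hQ1b (by positivity)
        _ = M₁*(x*r x*Q x) := by ring
    calc |sd x| ≤ |(1*r x + x*r' x) * Q x| + |(x*r x) * Q' x| := abs_add_le _ _
      _ ≤ (rb+hi*r1)*Q x + M₁*(x*r x*Q x) := add_le_add h1 h2
  -- first derivative bound
  have key1 : (1-β*γ)*|sd x| ≤ M₁ * (1 + γ*x*r x*Q x) * (β + x*r x*Q x) := by
    have h := arith1 (1-β*γ) κ M₁ (rb+hi*r1) A B (Q x) (x*r x*Q x)
      (1 + γ*x*r x*Q x) (β + x*r x*Q x) (β + lo*ra*A) (|sd x|)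
      h1βγ hκ0 hM₁0 hW1nn hA hδ hDδ hQB hQ0.le hsnn
      hsdb hκx hADN hM₁ hκ1
    linarith [h]
  have hd1 : |derivWithin (fun y => (1 + γ*y*r y*Q y)/(β + y*r y*Q y)) S x|
      ≤ M₁ * ((1 + γ*x*r x*Q x)/(β + x*r x*Q x)) := by
    rw [hf'eq x ⟨hxlo, hxhi⟩]
    rw [abs_div, abs_mul]
    rw [abs_of_pos (by positivity : (0:ℝ) < (β + x*r x*Q x)^2)]
    rw [abs_of_neg (by linarith : -(1-β*γ) < 0)]
    have step : (1-β*γ)*|sd x| / (β + x*r x*Q x)^2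
        ≤ (M₁ * (1 + γ*x*r x*Q x) * (β + x*r x*Q x)) / (β + x*r x*Q x)^2 := by
      apply div_le_div_of_nonneg_right key1 (by positivity)
    calc - -(1-β*γ) * |sd x| / (β + x*r x*Q x)^2
        = (1-β*γ)*|sd x| / (β + x*r x*Q x)^2 := by ring
      _ ≤ (M₁ * (1 + γ*x*r x*Q x) * (β + x*r x*Q x)) / (β + x*r x*Q x)^2 := step
      _ = M₁ * ((1 + γ*x*r x*Q x)/(β + x*r x*Q x)) := by
          field_simp
  -- second derivative bound
  have hEb : |E x| ≤ ((2*r1+hi*r2)*B + 2*(rb+hi*r1)*M₁*B) + M₂*(x*r x*Q x) := by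
    have hc1 : |1*r' x + (1*r' x + x*r'' x)| ≤ 2*r1 + hi*r2 := by
      have h1 : |x*r'' x| ≤ hi*r2 := by
        rw [abs_mul, abs_of_pos hx0]
        exact mul_le_mul hxhi hr2b (abs_nonneg _) (by linarith)
      calc |1*r' x + (1*r' x + x*r'' x)| ≤ |1*r' x| + (|1*r' x| + |x*r'' x|) :=
            (abs_add_le _ _).trans (by gcongr; exact abs_add_le _ _)
        _ ≤ 2*r1 + hi*r2 := by rw [one_mul]; linarith
    have hc2 : |1*r x + x*r' x| ≤ rb + hi*r1 := by
      have h1 : |x*r' x| ≤ hi*r1 := by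
        rw [abs_mul, abs_of_pos hx0]
        exact mul_le_mul hxhi hr1b (abs_nonneg _) (by linarith)
      calc |1*r x + x*r' x| ≤ |1*r x| + |x*r' x| := abs_add_le _ _
        _ ≤ rb + hi*r1 := by rw [one_mul, abs_of_pos hr0]; linarith
    have t1 : |(1*r' x + (1*r' x + x*r'' x)) * Q x| ≤ (2*r1+hi*r2)*B := by
      rw [abs_mul, abs_of_pos hQ0]
      calc |1*r' x + (1*r' x + x*r'' x)| * Q x ≤ (2*r1 + hi*r2)*Q x :=
            mul_le_mul_of_nonneg_right hc1 hQ0.le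
        _ ≤ (2*r1 + hi*r2)*B := mul_le_mul_of_nonneg_left hQB hCEnn
    have t2 : |(1*r x + x*r' x) * Q' x| ≤ (rb+hi*r1)*M₁*B := by
      rw [abs_mul]
      calc |1*r x + x*r' x| * |Q' x| ≤ (rb+hi*r1)*(M₁*Q x) :=
            mul_le_mul hc2 hQ1b (abs_nonneg _) hW1nn
        _ ≤ (rb+hi*r1)*(M₁*B) := by
            have : M₁*Q x ≤ M₁*B := mul_le_mul_of_nonneg_left hQB hM₁0
            exact mul_le_mul_of_nonneg_left this hW1nn
        _ = (rb+hi*r1)*M₁*B := by ring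
    have t3 : |(x*r x) * Q'' x| ≤ M₂*(x*r x*Q x) := by
      rw [abs_mul, abs_of_pos (by positivity : (0:ℝ) < x*r x)]
      calc (x*r x)*|Q'' x| ≤ (x*r x)*(M₂*Q x) :=
            mul_le_mul_of_nonneg_left hQ2b (by positivity)
        _ = M₂*(x*r x*Q x) := by ring
    calc |E x| ≤ |(1*r' x + (1*r' x + x*r'' x)) * Q x + (1*r x + x*r' x) * Q' x|
          + |(1*r x + x*r' x) * Q' x + (x*r x) * Q'' x| := abs_add_le _ _
      _ ≤ (|(1*r' x + (1*r' x + x*r'' x)) * Q x| + |(1*r x + x*r' x) * Q' x|)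
          + (|(1*r x + x*r' x) * Q' x| + |(x*r x) * Q'' x|) := by
            gcongr <;> exact abs_add_le _ _
      _ ≤ ((2*r1+hi*r2)*B + 2*(rb+hi*r1)*M₁*B) + M₂*(x*r x*Q x) := by linarith
  have hsdB : |sd x| ≤ (rb+hi*r1)*B + M₁*(hi*rb*B) := by
    refine le_trans hsdb ?_
    have : M₁*(x*r x*Q x) ≤ M₁*(hi*rb*B) := mul_le_mul_of_nonneg_left hs2 hM₁0
    have h2 : (rb+hi*r1)*Q x ≤ (rb+hi*r1)*B :=
      mul_le_mul_of_nonneg_left hQB hW1nn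
    linarith
  have key2 : (1-β*γ)*|E x*(β + x*r x*Q x) - 2*sd x^2|
      ≤ M₂ * (1 + γ*x*r x*Q x) * (β + x*r x*Q x)^2 := by
    have hwb : |E x*(β + x*r x*Q x) - 2*sd x^2| ≤ |E x| * (β + x*r x*Q x) + 2*|sd x|^2 := by
      have h1 : |E x*(β + x*r x*Q x) - 2*sd x^2| ≤ |E x*(β + x*r x*Q x)| + |2*sd x^2| :=
        abs_sub _ _
      have h2 : |E x*(β + x*r x*Q x)| = |E x| * (β + x*r x*Q x) := by
        rw [abs_mul, abs_of_pos hD]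
      have h3 : |2*sd x^2| = 2*|sd x|^2 := by
        rw [abs_mul, abs_of_pos two_pos, abs_of_nonneg (sq_nonneg _), sq_abs]
      linarith
    have h := arith2 (1-β*γ) κ M₂ ((2*r1+hi*r2)*B + 2*(rb+hi*r1)*M₁*B)
      ((rb+hi*r1)*B + M₁*(hi*rb*B)) A (β + lo*ra*A) (1 + γ*x*r x*Q x)
      (β + x*r x*Q x) (x*r x*Q x) (|E x*(β + x*r x*Q x) - 2*sd x^2|) (|sd x|) (|E x|)
      h1βγ hκ0 hM₂0 hCE2nn hA hδ hDδ hsnn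
      hEb (abs_nonneg _) hsdB (abs_nonneg _) hwb hκx hADN hM₂ hκ1
    linarith [h]
  have hd2 : |derivWithin (derivWithin
        (fun y => (1 + γ*y*r y*Q y)/(β + y*r y*Q y)) S) S x|
      ≤ M₂ * ((1 + γ*x*r x*Q x)/(β + x*r x*Q x)) := by
    rw [hf''eq x ⟨hxlo, hxhi⟩]
    rw [abs_div, abs_mul]
    rw [abs_of_pos (by positivity : (0:ℝ) < (β + x*r x*Q x)^3)]
    rw [abs_of_neg (by linarith : -(1-β*γ) < 0)]
    have step : (1-β*γ)*|E x*(β + x*r x*Q x) - 2*sd x^2| / (β + x*r x*Q x)^3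
        ≤ (M₂ * (1 + γ*x*r x*Q x) * (β + x*r x*Q x)^2) / (β + x*r x*Q x)^3 := by
      apply div_le_div_of_nonneg_right key2 (by positivity)
    calc - -(1-β*γ) * |E x*(β + x*r x*Q x) - 2*sd x^2| / (β + x*r x*Q x)^3
        = (1-β*γ)*|E x*(β + x*r x*Q x) - 2*sd x^2| / (β + x*r x*Q x)^3 := by ring
      _ ≤ (M₂ * (1 + γ*x*r x*Q x) * (β + x*r x*Q x)^2) / (β + x*r x*Q x)^3 := step
      _ = M₂ * ((1 + γ*x*r x*Q x)/(β + x*r x*Q x)) := by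
          field_simp
  exact ⟨hfA, hfB, hd1, hd2⟩

set_option maxHeartbeats 1000000 in
/-- Let `(β,γ)` be antiferromagnetic and `I = [lo, hi]` a closed bounded
interval of positive reals.  Let `R₁,…,R_k` and `Q₀` be twice continuously differentiable
functions from `I` into `(γ, 1/β)` (encoded by `γ < f λ` and `β·f λ < 1`, which interprets
`1/β = +∞` for `β = 0`).  Then there are bounded intervals `I₁ = [c₁, d₁]` and `I₂ = [c₂, d₂]`,
independent of `m` and of the sequence `a`, such that every `Q_m` is twice continuously
differentiable on `I` with first derivative in `I₁` and second derivative in `I₂` on `I`. -/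
theorem Qseq_uniform_derivative_bounds (β γ : ℝ) (hanti : Antiferro β γ)
    (lo hi : ℝ) (hlo : 0 < lo) (hlohi : lo < hi) (k : ℕ) (R : Fin k → ℝ → ℝ) (Q₀ : ℝ → ℝ)
    (hR : ∀ i, ContDiffOn ℝ 2 (R i) (Set.Icc lo hi))
    (hRrange : ∀ i, ∀ lam ∈ Set.Icc lo hi, γ < R i lam ∧ β * R i lam < 1)
    (hQ₀ : ContDiffOn ℝ 2 Q₀ (Set.Icc lo hi))
    (hQ₀range : ∀ lam ∈ Set.Icc lo hi, γ < Q₀ lam ∧ β * Q₀ lam < 1) :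
    ∃ c₁ d₁ c₂ d₂ : ℝ, ∀ (a : ℕ → Fin k) (m : ℕ),
      ContDiffOn ℝ 2 (Qseq β γ R Q₀ a m) (Set.Icc lo hi) ∧
      ∀ lam ∈ Set.Icc lo hi,
        derivWithin (Qseq β γ R Q₀ a m) (Set.Icc lo hi) lam ∈ Set.Icc c₁ d₁ ∧
        derivWithin (derivWithin (Qseq β γ R Q₀ a m) (Set.Icc lo hi)) (Set.Icc lo hi) lam ∈
          Set.Icc c₂ d₂ := by
  obtain ⟨hβ, hγ, hβγ, hβγ0⟩ := hanti
  rcases Nat.eq_zero_or_pos k with hk | hk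
  · subst hk
    exact ⟨0, 0, 0, 0, fun a => (a 0).elim0⟩
  have hFinNe : Nonempty (Fin k) := ⟨⟨0, hk⟩⟩
  have hhi : 0 < hi := hlo.trans hlohi
  have h1βγ : (0:ℝ) < 1 - β*γ := by linarith
  have hS : UniqueDiffOn ℝ (Set.Icc lo hi) := uniqueDiffOn_Icc hlohi
  have hSne : (Set.Icc lo hi).Nonempty := nonempty_Icc.mpr hlohi.le
  have hScomp : IsCompact (Set.Icc lo hi) := isCompact_Icc
  -- extremes of Q₀
  obtain ⟨x0, hx0S, hx0min⟩ := hScomp.exists_isMinOn hSne hQ₀.continuousOn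
  obtain ⟨x1, hx1S, hx1max⟩ := hScomp.exists_isMaxOn hSne hQ₀.continuousOn
  set A0 := Q₀ x0 with hA0def
  set B0 := Q₀ x1 with hB0def
  have hA0γ : γ < A0 := (hQ₀range x0 hx0S).1
  have hA0pos : 0 < A0 := lt_of_le_of_lt hγ hA0γ
  have hA0B0 : A0 ≤ B0 := le_trans (hx0min hx0S) (hx1max hx0S)
  -- lower bounds of R i
  have hRlow : ∀ i : Fin k, ∃ ci, γ < ci ∧ ∀ x ∈ Set.Icc lo hi, ci ≤ R i x := by
    intro i
    obtain ⟨xi, hxiS, hmin⟩ := hScomp.exists_isMinOn hSne (hR i).continuousOn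
    exact ⟨R i xi, (hRrange i xi hxiS).1, fun x hx => hmin hx⟩
  choose cR hcR1 hcR2 using hRlow
  have hRhigh : ∀ i : Fin k, ∃ di, ∀ x ∈ Set.Icc lo hi, R i x ≤ di := by
    intro i
    obtain ⟨xi, hxiS, hmax⟩ := hScomp.exists_isMaxOn hSne (hR i).continuousOn
    exact ⟨R i xi, fun x hx => hmax hx⟩
  choose dR hdR using hRhigh
  set ra := Finset.univ.inf' Finset.univ_nonempty cR with hradef
  set rb := Finset.univ.sup' Finset.univ_nonempty dR with hrbdef
  have hraγ : γ < ra := by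
    obtain ⟨i0, -, hi0⟩ := Finset.exists_mem_eq_inf' Finset.univ_nonempty cR
    rw [hradef, hi0]; exact hcR1 i0
  have hra : 0 < ra := lt_of_le_of_lt hγ hraγ
  have hraR : ∀ (i : Fin k), ∀ x ∈ Set.Icc lo hi, ra ≤ R i x := fun i x hx =>
    le_trans (Finset.inf'_le cR (Finset.mem_univ i)) (hcR2 i x hx)
  have hRrb : ∀ (i : Fin k), ∀ x ∈ Set.Icc lo hi, R i x ≤ rb := fun i x hx =>
    le_trans (hdR i x hx) (Finset.le_sup' dR (Finset.mem_univ i))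
  have hrarb : ra ≤ rb := by
    obtain ⟨i0⟩ := hFinNe
    exact le_trans (hraR i0 lo ⟨le_rfl, hlohi.le⟩) (hRrb i0 lo ⟨le_rfl, hlohi.le⟩)
  have hrb0 : 0 < rb := lt_of_lt_of_le hra hrarb
  -- bounds on derivatives of R i
  have hR1 : ∀ i : Fin k, ∃ C, 0 ≤ C ∧
      ∀ x ∈ Set.Icc lo hi, |derivWithin (R i) (Set.Icc lo hi) x| ≤ C := by
    intro i
    obtain ⟨C, hC⟩ := hScomp.exists_bound_of_continuousOn
      ((((hR i).derivWithin hS le_rfl : ContDiffOn ℝ 1 _ _)).continuousOn)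
    refine ⟨C, le_trans (abs_nonneg _) (by simpa using hC lo ⟨le_rfl, hlohi.le⟩), ?_⟩
    intro x hx; simpa using hC x hx
  choose CR1 hCR1nn hCR1b using hR1
  have hR2 : ∀ i : Fin k, ∃ C, 0 ≤ C ∧ ∀ x ∈ Set.Icc lo hi,
      |derivWithin (derivWithin (R i) (Set.Icc lo hi)) (Set.Icc lo hi) x| ≤ C := by
    intro i
    obtain ⟨C, hC⟩ := hScomp.exists_bound_of_continuousOn
      (((((hR i).derivWithin hS le_rfl : ContDiffOn ℝ 1 _ _)).derivWithin hS le_rfl : ContDiffOn ℝ 0 _ _).continuousOn)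
    refine ⟨C, le_trans (abs_nonneg _) (by simpa using hC lo ⟨le_rfl, hlohi.le⟩), ?_⟩
    intro x hx; simpa using hC x hx
  choose CR2 hCR2nn hCR2b using hR2
  set r1 := Finset.univ.sup' Finset.univ_nonempty CR1 with hr1def
  set r2 := Finset.univ.sup' Finset.univ_nonempty CR2 with hr2def
  have hr1 : 0 ≤ r1 := by
    obtain ⟨i0⟩ := hFinNe
    exact le_trans (hCR1nn i0) (Finset.le_sup' CR1 (Finset.mem_univ i0))
  have hr2 : 0 ≤ r2 := by
    obtain ⟨i0⟩ := hFinNe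
    exact le_trans (hCR2nn i0) (Finset.le_sup' CR2 (Finset.mem_univ i0))
  have hr1b : ∀ (i : Fin k), ∀ x ∈ Set.Icc lo hi,
      |derivWithin (R i) (Set.Icc lo hi) x| ≤ r1 := fun i x hx =>
    le_trans (hCR1b i x hx) (Finset.le_sup' CR1 (Finset.mem_univ i))
  have hr2b : ∀ (i : Fin k), ∀ x ∈ Set.Icc lo hi,
      |derivWithin (derivWithin (R i) (Set.Icc lo hi)) (Set.Icc lo hi) x| ≤ r2 :=
    fun i x hx => le_trans (hCR2b i x hx) (Finset.le_sup' CR2 (Finset.mem_univ i))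
  -- bounds on derivatives of Q₀
  obtain ⟨CQ1, hCQ1⟩ := hScomp.exists_bound_of_continuousOn
    (((hQ₀.derivWithin hS le_rfl : ContDiffOn ℝ 1 _ _)).continuousOn)
  obtain ⟨CQ2, hCQ2⟩ := hScomp.exists_bound_of_continuousOn
    ((((hQ₀.derivWithin hS le_rfl : ContDiffOn ℝ 1 _ _)).derivWithin hS le_rfl : ContDiffOn ℝ 0 _ _).continuousOn)
  have hCQ1nn : 0 ≤ CQ1 := le_trans (abs_nonneg _) (by simpa using hCQ1 lo ⟨le_rfl, hlohi.le⟩)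
  have hCQ2nn : 0 ≤ CQ2 := le_trans (abs_nonneg _) (by simpa using hCQ2 lo ⟨le_rfl, hlohi.le⟩)
  have hCQ1b : ∀ x ∈ Set.Icc lo hi, |derivWithin Q₀ (Set.Icc lo hi) x| ≤ CQ1 := by
    intro x hx; simpa using hCQ1 x hx
  have hCQ2b : ∀ x ∈ Set.Icc lo hi,
      |derivWithin (derivWithin Q₀ (Set.Icc lo hi)) (Set.Icc lo hi) x| ≤ CQ2 := by
    intro x hx; simpa using hCQ2 x hx
  -- the invariant interval [A, B]
  have hden0 : 0 < β + lo*ra*γ := by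
    rcases hβγ0 with hb | hg
    · have h1 : 0 < β := lt_of_le_of_ne hβ (Ne.symm hb)
      have h2 : 0 ≤ lo*ra*γ := mul_nonneg (mul_nonneg hlo.le hra.le) hγ
      linarith
    · have h1 : 0 < γ := lt_of_le_of_ne hγ (Ne.symm hg)
      have h2 : 0 < lo*ra*γ := mul_pos (mul_pos hlo hra) h1
      linarith
  set B := max B0 (γ + (1-β*γ)/(β + lo*ra*γ)) with hBdef
  have hB0B : B0 ≤ B := le_max_left _ _
  have hBpos : 0 < B := lt_of_lt_of_le (lt_of_lt_of_le hA0pos hA0B0) hB0B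
  have hDmaxpos : 0 < β + hi*rb*B := by
    have h2 : 0 < hi*rb*B := mul_pos (mul_pos hhi hrb0) hBpos
    linarith
  set A := min A0 (γ + (1-β*γ)/(β + hi*rb*B)) with hAdef
  have hγA : γ < A := lt_min hA0γ (by
    have : 0 < (1-β*γ)/(β + hi*rb*B) := div_pos h1βγ hDmaxpos
    linarith)
  have hA : 0 < A := lt_of_le_of_lt hγ hγA
  have hAB : A ≤ B := le_trans (min_le_left _ _) (le_trans hA0B0 hB0B)
  have hδ : 0 < β + lo*ra*A := by
    have h2 : 0 < lo*ra*A := mul_pos (mul_pos hlo hra) hA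
    linarith
  have hAinv : A ≤ γ + (1-β*γ)/(β + hi*rb*B) := min_le_right _ _
  have hBinv : γ + (1-β*γ)/(β + lo*ra*A) ≤ B := by
    have h1 : β + lo*ra*γ ≤ β + lo*ra*A := by
      have h2 := mul_le_mul_of_nonneg_left hγA.le (mul_nonneg hlo.le hra.le)
      calc β + lo*ra*γ = β + (lo*ra)*γ := by ring
        _ ≤ β + (lo*ra)*A := by linarith
        _ = β + lo*ra*A := by ring
    have h2 : (1-β*γ)/(β + lo*ra*A) ≤ (1-β*γ)/(β + lo*ra*γ) :=
      div_le_div_of_nonneg_left h1βγ.le hden0 h1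
    calc γ + (1-β*γ)/(β + lo*ra*A) ≤ γ + (1-β*γ)/(β + lo*ra*γ) := by linarith
      _ ≤ B := le_max_right _ _
  -- the contraction constant κ
  have hs0pos : 0 < lo*ra*A := by positivity
  have hs01 : lo*ra*A ≤ hi*rb*B := by
    have h2 := mul_le_mul (mul_le_mul hlohi.le hrarb hra.le hhi.le) hAB hA.le
      (mul_nonneg hhi.le hrb0.le)
    linarith
  have hGden : ∀ s ∈ Set.Icc (lo*ra*A) (hi*rb*B), (1+γ*s)*(β+s) ≠ 0 := by
    intro s hs
    have h1 : 0 < 1 + γ*s := by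
      have := mul_nonneg hγ (le_trans hs0pos.le hs.1)
      linarith
    have h2 : 0 < β + s := by linarith [hs.1, hs0pos]
    positivity
  have hGcont : ContinuousOn (fun s => (1-β*γ)*s/((1+γ*s)*(β+s)))
      (Set.Icc (lo*ra*A) (hi*rb*B)) := by
    apply ContinuousOn.div
    · fun_prop
    · fun_prop
    · exact hGden
  obtain ⟨st, hstS, hstmax⟩ := isCompact_Icc.exists_isMaxOn (nonempty_Icc.mpr hs01) hGcont
  set κ := (1-β*γ)*st/((1+γ*st)*(β+st)) with hκdef
  have hst1 : 0 < 1 + γ*st := by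
    have := mul_nonneg hγ (le_trans hs0pos.le hstS.1)
    linarith
  have hst2 : 0 < β + st := by linarith [hstS.1, hs0pos]
  have hκ0 : 0 ≤ κ := by
    rw [hκdef]
    have hstpos : 0 < st := lt_of_lt_of_le hs0pos hstS.1
    positivity
  have hκ1 : κ < 1 := by
    rw [hκdef]
    rw [div_lt_one (by positivity)]
    have hstpos : 0 < st := lt_of_lt_of_le hs0pos hstS.1
    rcases hβγ0 with hb | hg
    · have hb' : 0 < β := lt_of_le_of_ne hβ (Ne.symm hb)
      nlinarith [mul_nonneg (mul_nonneg hβ hγ) hstpos.le,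
        mul_nonneg hγ (mul_nonneg hstpos.le hstpos.le)]
    · have hg' : 0 < γ := lt_of_le_of_ne hγ (Ne.symm hg)
      nlinarith [mul_nonneg (mul_nonneg hβ hγ) hstpos.le,
        mul_pos hg' (mul_pos hstpos hstpos)]
  have hκprop : ∀ s ∈ Set.Icc (lo*ra*A) (hi*rb*B),
      (1-β*γ)*s ≤ κ * ((1+γ*s)*(β+s)) := by
    intro s hs
    have h1 : 0 < 1 + γ*s := by
      have := mul_nonneg hγ (le_trans hs0pos.le hs.1)
      linarith
    have h2 : 0 < β + s := by linarith [hs.1, hs0pos]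
    have h3 := hstmax hs
    have h4 : (1-β*γ)*s/((1+γ*s)*(β+s)) ≤ κ := h3
    exact (div_le_iff₀ (by positivity)).mp h4
  -- the derivative bound constants
  set δ := β + lo*ra*A with hδdef
  set M₁ := max (CQ1/A) ((1-β*γ)*((rb + hi*r1)*B)/((1-κ)*A*δ^2)) with hM₁def
  have hYpos : 0 < (1-κ)*A*δ^2 := by
    have : 0 < 1-κ := by linarith
    positivity
  have hM₁0 : 0 ≤ M₁ := le_trans (div_nonneg hCQ1nn hA.le) (le_max_left _ _)
  have hM₁ : (1-β*γ)*((rb + hi*r1)*B) ≤ (1-κ)*M₁*A*δ^2 := by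
    have h := (div_le_iff₀ hYpos).mp (le_max_right (CQ1/A)
      ((1-β*γ)*((rb + hi*r1)*B)/((1-κ)*A*δ^2)))
    rw [← hM₁def] at h
    linarith [h]
  set M₂ := max (CQ2/A) ((1-β*γ)*(((2*r1 + hi*r2)*B + 2*(rb+hi*r1)*M₁*B)*δ
      + 2*((rb+hi*r1)*B + M₁*(hi*rb*B))^2)/((1-κ)*A*δ^3)) with hM₂def
  have hY3pos : 0 < (1-κ)*A*δ^3 := by
    have : 0 < 1-κ := by linarith
    positivity
  have hM₂0 : 0 ≤ M₂ := le_trans (div_nonneg hCQ2nn hA.le) (le_max_left _ _)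
  have hM₂ : (1-β*γ)*(((2*r1 + hi*r2)*B + 2*(rb+hi*r1)*M₁*B)*δ
      + 2*((rb+hi*r1)*B + M₁*(hi*rb*B))^2) ≤ (1-κ)*M₂*A*δ^3 := by
    have h := (div_le_iff₀ hY3pos).mp (le_max_right (CQ2/A)
      ((1-β*γ)*(((2*r1 + hi*r2)*B + 2*(rb+hi*r1)*M₁*B)*δ
      + 2*((rb+hi*r1)*B + M₁*(hi*rb*B))^2)/((1-κ)*A*δ^3)))
    rw [← hM₂def] at h
    linarith [h]
  -- the main induction
  have main : ∀ (a : ℕ → Fin k) (m : ℕ),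
      ContDiffOn ℝ 2 (Qseq β γ R Q₀ a m) (Set.Icc lo hi) ∧
      ∀ x ∈ Set.Icc lo hi,
        A ≤ Qseq β γ R Q₀ a m x ∧ Qseq β γ R Q₀ a m x ≤ B ∧
        |derivWithin (Qseq β γ R Q₀ a m) (Set.Icc lo hi) x| ≤ M₁ * Qseq β γ R Q₀ a m x ∧
        |derivWithin (derivWithin (Qseq β γ R Q₀ a m) (Set.Icc lo hi)) (Set.Icc lo hi) x|
          ≤ M₂ * Qseq β γ R Q₀ a m x := by
    intro a m
    induction m with
    | zero =>
      refine ⟨hQ₀, fun x hx => ?_⟩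
      have hAQ : A ≤ Q₀ x := le_trans (min_le_left _ _) (hx0min hx)
      have hQB : Q₀ x ≤ B := le_trans (hx1max hx) hB0B
      refine ⟨hAQ, hQB, ?_, ?_⟩
      · calc |derivWithin Q₀ (Set.Icc lo hi) x| ≤ CQ1 := hCQ1b x hx
          _ = (CQ1/A)*A := by field_simp
          _ ≤ M₁*A := mul_le_mul_of_nonneg_right (le_max_left _ _) hA.le
          _ ≤ M₁*Q₀ x := mul_le_mul_of_nonneg_left hAQ hM₁0
      · calc |derivWithin (derivWithin Q₀ (Set.Icc lo hi)) (Set.Icc lo hi) x| ≤ CQ2 :=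
            hCQ2b x hx
          _ = (CQ2/A)*A := by field_simp
          _ ≤ M₂*A := mul_le_mul_of_nonneg_right (le_max_left _ _) hA.le
          _ ≤ M₂*Q₀ x := mul_le_mul_of_nonneg_left hAQ hM₂0
    | succ m ih =>
      obtain ⟨ih1, ih2⟩ := ih
      have hstep := step_lemma β γ lo hi A B ra rb r1 r2 κ M₁ M₂
        hβ hγ hβγ hlo hlohi hγA hA hAB hra hrarb hr1 hr2 hκ0 hκ1 hκprop hδ hAinv hBinv
        hM₁0 hM₁ hM₂0 hM₂ (R (a m)) (Qseq β γ R Q₀ a m) (hR (a m)) ih1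
        (fun x hx => ⟨hraR (a m) x hx, hRrb (a m) x hx, hr1b (a m) x hx, hr2b (a m) x hx⟩)
        ih2
      simp only [Qseq]
      exact hstep
  refine ⟨-(M₁*B), M₁*B, -(M₂*B), M₂*B, fun a m => ?_⟩
  obtain ⟨h1, h2⟩ := main a m
  refine ⟨h1, fun lam hlam => ?_⟩
  obtain ⟨hA', hB', hd1, hd2⟩ := h2 lam hlam
  have hb1 : M₁ * Qseq β γ R Q₀ a m lam ≤ M₁*B := mul_le_mul_of_nonneg_left hB' hM₁0
  have hb2 : M₂ * Qseq β γ R Q₀ a m lam ≤ M₂*B := mul_le_mul_of_nonneg_left hB' hM₂0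
  constructor
  · have := abs_le.mp (le_trans hd1 hb1)
    exact ⟨this.1, this.2⟩
  · have := abs_le.mp (le_trans hd2 hb2)
    exact ⟨this.1, this.2⟩
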